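/- If {x, y} is a minimal separator of a graph G and G contains an xy-path of length k ≥ 2, then G contains a cycle of length at least k + 1. -/

import Mathlib

open SimpleGraph

variable {V : Type*}

/-- Reachability within the subgraph of `G` induced by the vertex set `W`. -/
def ReachIn (G : SimpleGraph V) (W : Set V) (x y : V) : Prop :=
  ∃ (hx : x ∈ W) (hy : y ∈ W), (G.induce W).Reachable ⟨x, hx⟩ ⟨y, hy⟩

/-- Removing `S` disconnects some connected component of `G`: there are two vertices
outside `S` that are connected in `G` but not in `G - S`. -/
def Separates (G : SimpleGraph V) (S : Set V) : Prop :=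
  ∃ u v : V, u ∉ S ∧ v ∉ S ∧ G.Reachable u v ∧ ¬ ReachIn G Sᶜ u v

/-- `S` is a minimal separator of `G`. -/
def IsMinimalSeparator (G : SimpleGraph V) (S : Set V) : Prop :=
  Separates G S ∧ ∀ S' ⊂ S, ¬ Separates G S'

/-- `C` is a connected component of the subgraph of `G` induced by `W`. -/
def IsCompOf (G : SimpleGraph V) (C W : Set V) : Prop :=
  C ⊆ W ∧ (G.induce C).Connected ∧ ∀ u ∈ C, ∀ v ∈ W, G.Adj u v → v ∈ C

/-- A separation `(A, B)` of a graph `G`. -/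
def IsSeparation (G : SimpleGraph V) (A B : Set V) : Prop :=
  A ∪ B = Set.univ ∧ ∀ u ∈ A \ B, ∀ v ∈ B \ A, ¬ G.Adj u v

/-- `(T, X)` is a tree decomposition of `G`. -/
structure IsTreeDecomp {ι : Type*} (G : SimpleGraph V) (T : SimpleGraph ι)
    (X : ι → Set V) : Prop where
  isTree : T.IsTree
  covers_verts : ∀ v : V, ∃ i, v ∈ X i
  covers_edges : ∀ ⦃u v : V⦄, G.Adj u v → ∃ i, u ∈ X i ∧ v ∈ X i
  subtree : ∀ v : V, (T.induce {i | v ∈ X i}).Connected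

/-- The tree decomposition given by the bag function `X` has adhesion at most `d`. -/
def AdhesionLE {ι : Type*} (T : SimpleGraph ι) (X : ι → Set V) (d : ℕ) : Prop :=
  ∀ ⦃i j : ι⦄, T.Adj i j → (X i ∩ X j).ncard ≤ d

/-- The torso of the vertex set `W` in `G`: the induced subgraph `G[W]` with an edge added
between each pair of vertices of `W` connected by a path internally avoiding `W`. -/
def torso (G : SimpleGraph V) (W : Set V) : SimpleGraph W :=
  SimpleGraph.fromRel (fun u v =>
    G.Adj u v ∨ ∃ p : G.Walk (u : V) (v : V), p.IsPath ∧
      ∀ z ∈ p.support, z ≠ (u : V) → z ≠ (v : V) → z ∉ W)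

/-- One smoothing step: `K` is obtained from `H` by replacing the degree-2 vertex `v`,
whose two neighbors are `a` and `b`, by a direct edge between `a` and `b`. -/
def SmoothStep (H K : SimpleGraph.Subgraph (⊤ : SimpleGraph V)) : Prop :=
  ∃ v a b : V, a ≠ b ∧ a ≠ v ∧ b ≠ v ∧ v ∈ H.verts ∧ H.neighborSet v = {a, b} ∧
    K.verts = H.verts \ {v} ∧
    ∀ x y : V, K.Adj x y ↔ ((H.Adj x y ∧ x ≠ v ∧ y ≠ v) ∨ (x = a ∧ y = b) ∨ (x = b ∧ y = a))

/-- `K` (a graph on a subset of the vertices of `G`) is a topological minor of `G`: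
it is obtained from a subgraph of `G` by repeatedly smoothing degree-2 vertices. -/
def IsTopMinor (K : SimpleGraph.Subgraph (⊤ : SimpleGraph V)) (G : SimpleGraph V) : Prop :=
  ∃ H₀ : SimpleGraph.Subgraph (⊤ : SimpleGraph V),
    (∀ ⦃x y : V⦄, H₀.Adj x y → G.Adj x y) ∧ Relation.ReflTransGen SmoothStep H₀ K

/-- An abstract graph `H` is a topological minor of `G` if it is isomorphic to some
topological minor of `G`. -/
def IsTopMinorGraph {W : Type*} (H : SimpleGraph W) (G : SimpleGraph V) : Prop :=
  ∃ K : SimpleGraph.Subgraph (⊤ : SimpleGraph V), IsTopMinor K G ∧ Nonempty (H ≃g K.coe)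

/-- One edge-contraction step: `K` is obtained from `H` by contracting the edge `{a, b}`
(the vertex `b` is merged into `a`). -/
def ContractStep (H K : SimpleGraph.Subgraph (⊤ : SimpleGraph V)) : Prop :=
  ∃ a b : V, H.Adj a b ∧ K.verts = H.verts \ {b} ∧
    ∀ x y : V, K.Adj x y ↔ (x ≠ b ∧ y ≠ b ∧ x ≠ y ∧
      (H.Adj x y ∨ (x = a ∧ H.Adj b y) ∨ (y = a ∧ H.Adj x b)))

/-- `G` contains `Hpat` as a minor: some graph obtained from a subgraph of `G` by
contracting edges is isomorphic to `Hpat`. -/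
def HasMinor {W : Type*} (G : SimpleGraph V) (Hpat : SimpleGraph W) : Prop :=
  ∃ H₀ K : SimpleGraph.Subgraph (⊤ : SimpleGraph V),
    (∀ ⦃x y : V⦄, H₀.Adj x y → G.Adj x y) ∧ Relation.ReflTransGen ContractStep H₀ K ∧
      Nonempty (Hpat ≃g K.coe)

/-- Planarity, via Wagner's theorem: no `K₅`-minor and no `K₃,₃`-minor. -/
def IsPlanar (G : SimpleGraph V) : Prop :=
  ¬ HasMinor G (completeGraph (Fin 5)) ∧ ¬ HasMinor G (completeBipartiteGraph (Fin 3) (Fin 3))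

/-- A graph is triconnected if removing fewer than three vertices cannot disconnect it. -/
def Triconnected (G : SimpleGraph V) : Prop :=
  ∀ S : Set V, S.ncard < 3 → (G.induce Sᶜ).Preconnected

/-- A graph is claw-free if it has no induced `K_{1,3}`. -/
def ClawFree (G : SimpleGraph V) : Prop :=
  ∀ v a b c : V, G.Adj v a → G.Adj v b → G.Adj v c → a ≠ b → a ≠ c → b ≠ c →
    ¬ G.Adj a b → ¬ G.Adj a c → G.Adj b c

lemma reachIn_refl {G : SimpleGraph V} {W : Set V} {a : V} (ha : a ∈ W) : ReachIn G W a a :=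
  ⟨ha, ha, Reachable.refl _⟩

lemma ReachIn.symm {G : SimpleGraph V} {W : Set V} {a b : V} (h : ReachIn G W a b) :
    ReachIn G W b a := by
  obtain ⟨ha, hb, r⟩ := h; exact ⟨hb, ha, r.symm⟩

lemma ReachIn.trans {G : SimpleGraph V} {W : Set V} {a b c : V} (h : ReachIn G W a b)
    (h' : ReachIn G W b c) : ReachIn G W a c := by
  obtain ⟨ha, hb, r⟩ := h
  obtain ⟨hb', hc, r'⟩ := h'
  exact ⟨ha, hc, r.trans (by convert r' using 2)⟩

lemma reachIn_of_adj {G : SimpleGraph V} {W : Set V} {a b : V} (ha : a ∈ W) (hb : b ∈ W)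
    (h : G.Adj a b) : ReachIn G W a b :=
  ⟨ha, hb, Adj.reachable (by exact h)⟩

lemma reachIn_of_walk {G : SimpleGraph V} {W : Set V} {a b : V} (w : G.Walk a b)
    (hw : ∀ z ∈ w.support, z ∈ W) : ReachIn G W a b := by
  induction w with
  | nil => exact reachIn_refl (hw _ (by simp))
  | cons h q ih =>
    refine (reachIn_of_adj (hw _ (by simp)) (hw _ (by simp)) h).trans (ih fun z hz => hw _ (by simp [hz]))

lemma walk_of_reachIn {G : SimpleGraph V} {W : Set V} {a b : V} (h : ReachIn G W a b) :
    ∃ w : G.Walk a b, ∀ z ∈ w.support, z ∈ W := by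
  obtain ⟨ha, hb, r⟩ := h
  obtain ⟨q⟩ := r
  refine ⟨q.map (SimpleGraph.Embedding.induce W).toHom, ?_⟩
  intro z hz
  change z ∈ (q.map (SimpleGraph.Embedding.induce W).toHom).support at hz
  rw [Walk.support_map, List.mem_map] at hz
  obtain ⟨⟨z', hz'⟩, _, rfl⟩ := hz
  exact hz'

lemma mem_compl_pair {x y z : V} (hx : z ≠ x) (hy : z ≠ y) : z ∈ ({x, y} : Set V)ᶜ := by
  simp [hx, hy]

/-- all non-endpoint vertices of a path avoiding `x` and ending at `y` are reachable
from the start within the complement of `{x,y}`. -/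

lemma reachIn_internal {G : SimpleGraph V} {x y : V} :
    ∀ {m : V} (q : G.Walk m y), q.IsPath → x ∉ q.support → m ∉ ({x, y} : Set V) →
      ∀ t ∈ q.support, t ∉ ({x, y} : Set V) → ReachIn G ({x, y} : Set V)ᶜ m t := by
  intro m q
  induction q with
  | nil =>
    intro _ _ hm t ht htS
    rw [Walk.support_nil, List.mem_singleton] at ht
    subst ht; exact reachIn_refl hm
  | @cons m m' yy h q ih =>
    intro hq hx hm t ht htS
    rw [Walk.support_cons, List.mem_cons] at ht
    rcases ht with rfl | ht
    · exact reachIn_refl hm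
    rw [Walk.cons_isPath_iff] at hq
    have hxs : x ∉ q.support := fun hh => hx (by simp [hh])
    have hm'x : m' ≠ x := fun hh => hxs (hh ▸ q.start_mem_support)
    have hm'y : m' ≠ yy := by
      rintro rfl
      rw [Walk.isPath_iff_eq_nil] at hq
      rw [hq.1, Walk.support_nil, List.mem_singleton] at ht
      exact htS (by simp [ht])
    have hm' : m' ∉ ({x, yy} : Set V) := by simp [hm'x, hm'y]
    exact (reachIn_of_adj (Set.mem_compl hm) (Set.mem_compl hm') h).trans (ih hq.1 hxs hm' t ht htS)

/-- From `¬ Separates G {y}` we extract a neighbor of `x` in the component of `u`. -/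

lemma exists_nbr {G : SimpleGraph V} {x y u v : V} (hxy : x ≠ y)
    (hu : u ∉ ({x, y} : Set V)) (hv : v ∉ ({x, y} : Set V)) (hre : G.Reachable u v)
    (hnr : ¬ ReachIn G ({x, y} : Set V)ᶜ u v) (h1 : ¬ Separates G {y}) :
    ∃ a, G.Adj x a ∧ ReachIn G ({x, y} : Set V)ᶜ a u := by
  classical
  have hry : ReachIn G ({y} : Set V)ᶜ u v := by
    by_contra hcon
    exact h1 ⟨u, v, by simp at hu ⊢; exact hu.2, by simp at hv ⊢; exact hv.2, hre, hcon⟩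
  obtain ⟨w1, hw1⟩ := walk_of_reachIn hry
  have hxsup : x ∈ w1.support := by
    by_contra hxs
    exact hnr (reachIn_of_walk w1 fun z hz => mem_compl_pair
      (fun h => hxs (h ▸ hz)) (fun h => by simpa [h] using hw1 z hz))
  set T := w1.takeUntil x hxsup with hT
  have hcount : T.support.count x = 1 := w1.count_support_takeUntil_eq_one hxsup
  have hux : x ≠ u := by rintro rfl; simp at hu
  obtain ⟨a, hxa, T', hTr⟩ := T.reverse.exists_eq_cons_of_ne hux
  have hsupp : T.support.reverse = x :: T'.support := by
    rw [← Walk.support_reverse, hTr, Walk.support_cons]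
  have hxT' : x ∉ T'.support := by
    have : (x :: T'.support).count x = 1 := by
      rw [← hsupp, List.count_reverse, hcount]
    have h2 : T'.support.count x + 1 = 1 := by simpa using this
    intro hh
    have := List.count_pos_iff.mpr hh
    omega
  have hsub : ∀ z ∈ T'.support, z ∈ ({x, y} : Set V)ᶜ := by
    intro z hz
    have hzT : z ∈ T.support := by
      rw [← List.mem_reverse, hsupp]; exact List.mem_cons_of_mem _ hz
    refine mem_compl_pair (fun h => hxT' (h ▸ hz)) (fun h => ?_)
    have := hw1 z (w1.support_takeUntil_subset hxsup hzT)
    simp [h] at this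
  exact ⟨a, hxa, reachIn_of_walk T' hsub⟩

lemma build_cycle {G : SimpleGraph V} {x y a b : V} (hxy : x ≠ y) (hxa : G.Adj x a)
    (hyb : G.Adj y b) (hab : ReachIn G ({x, y} : Set V)ᶜ a b) (p : G.Walk x y) (hp : p.IsPath)
    (hdisj : ∀ t ∈ p.support, t ≠ x → t ≠ y → ¬ ReachIn G ({x, y} : Set V)ᶜ a t) :
    ∃ c : G.Walk x x, c.IsCycle ∧ p.length + 1 ≤ c.length := by
  classical
  have ha : a ∈ ({x, y} : Set V)ᶜ := hab.1
  have hax : a ≠ x := by intro h; apply ha; simp [h]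
  have hay : a ≠ y := by intro h; apply ha; simp [h]
  obtain ⟨R₀, hR₀⟩ := walk_of_reachIn hab
  set A : G.Walk a y := R₀.append (Walk.cons hyb.symm Walk.nil) with hA
  set P₂ : G.Walk a y := A.bypass with hP₂def
  have hP₂ : P₂.IsPath := A.bypass_isPath
  have hkey : ∀ z ∈ P₂.support, z = y ∨ ReachIn G ({x, y} : Set V)ᶜ a z := by
    intro z hz
    have hzA : z ∈ A.support := A.support_bypass_subset hz
    rw [hA, Walk.mem_support_append_iff] at hzA
    rcases hzA with hzR | hzc
    · exact Or.inr (reachIn_of_walk (R₀.takeUntil z hzR)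
        (fun w hw => hR₀ w (R₀.support_takeUntil_subset hzR hw)))
    · rw [Walk.support_cons, List.mem_cons, Walk.support_nil, List.mem_singleton] at hzc
      rcases hzc with rfl | rfl
      · exact Or.inr (reachIn_of_walk R₀ hR₀ |>.trans (reachIn_refl (hR₀ _ R₀.end_mem_support)) |>.trans (reachIn_of_walk (Walk.nil) (by intro w hw; simp at hw; subst hw; exact hR₀ _ R₀.end_mem_support)))
      · exact Or.inl rfl
  set W : G.Walk a x := P₂.append p.reverse with hW
  have hyrev : p.reverse.support = y :: p.reverse.support.tail := Walk.support_eq_cons _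
  have hrevnodup : p.reverse.support.Nodup := by
    rw [Walk.isPath_def] at hp
    rw [Walk.support_reverse]; exact List.nodup_reverse.mpr hp
  have hWpath : W.IsPath := by
    rw [Walk.isPath_def, hW, Walk.support_append, List.nodup_append]
    refine ⟨hP₂.support_nodup, ?_, ?_⟩
    · exact (hrevnodup).tail
    · intro z hz z' hz' hzz'
      subst hzz'
      have hztail : z ∈ p.reverse.support.tail := hz'
      have hzsup : z ∈ p.support := by
        have : z ∈ p.reverse.support := by rw [hyrev]; exact List.mem_cons_of_mem _ hztail
        rwa [Walk.support_reverse, List.mem_reverse] at this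
      rcases hkey z hz with rfl | hzr
      · rw [hyrev] at hrevnodup
        exact (List.nodup_cons.mp hrevnodup).1 hztail
      · have hzS : z ∈ ({x, y} : Set V)ᶜ := hzr.2.1
        exact hdisj z hzsup (fun h => hzS (by simp [h])) (fun h => hzS (by simp [h])) hzr
  have hEdge : s(x, a) ∉ W.edges := by
    rw [hW, Walk.edges_append, List.mem_append]
    rintro (h | h)
    · have hxsup : x ∈ P₂.support := P₂.fst_mem_support_of_mem_edges h
      rcases hkey x hxsup with h' | h'
      · exact hxy h'
      · exact h'.2.1 (by simp)
    · have hasup : a ∈ p.reverse.support := p.reverse.snd_mem_support_of_mem_edges h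
      rw [Walk.support_reverse, List.mem_reverse] at hasup
      exact hdisj a hasup hax hay (reachIn_refl ha)
  refine ⟨Walk.cons hxa W, (Walk.cons_isCycle_iff W hxa).mpr ⟨hWpath, hEdge⟩, ?_⟩
  rw [Walk.length_cons, hW, Walk.length_append, Walk.length_reverse]
  omega

/-- If `{x, y}` is a minimal separator of `G` and `G` contains an `xy`-path of length
`k ≥ 2`, then `G` contains a cycle of length at least `k + 1`. -/
theorem xySeparator_path_gives_cycle [Fintype V] (G : SimpleGraph V)
    (x y : V) (hxy : x ≠ y) (hsep : IsMinimalSeparator G {x, y})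
    (k : ℕ) (hk : 2 ≤ k) (p : G.Walk x y) (hp : p.IsPath) (hlen : p.length = k) :
    ∃ (v : V) (c : G.Walk v v), c.IsCycle ∧ k + 1 ≤ c.length := by
  classical
  obtain ⟨hsepp, hmin⟩ := hsep
  obtain ⟨u, v, hu, hv, hre, hnr⟩ := hsepp
  have hpair : ({y, x} : Set V) = {x, y} := Set.pair_comm y x
  have h1 : ¬ Separates G {y} := by
    apply hmin
    have : x ∉ ({y} : Set V) := by simp [hxy]
    simpa using Set.ssubset_insert this
  have h2 : ¬ Separates G {x} := by
    apply hmin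
    rw [← hpair]
    have : y ∉ ({x} : Set V) := by simp [hxy.symm]
    simpa using Set.ssubset_insert this
  -- the x- and y-neighbors in the components of u and of v
  obtain ⟨au, hxau, hrau⟩ := exists_nbr hxy hu hv hre hnr h1
  obtain ⟨bu, hybu, hrbu⟩ := exists_nbr (x := y) (y := x) hxy.symm
    (by rw [hpair]; exact hu) (by rw [hpair]; exact hv) hre
    (by rw [hpair]; exact hnr) h2
  rw [hpair] at hrbu
  have hnr' : ¬ ReachIn G ({x, y} : Set V)ᶜ v u := fun h => hnr h.symm
  obtain ⟨av, hxav, hrav⟩ := exists_nbr hxy hv hu hre.symm hnr' h1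
  obtain ⟨bv, hybv, hrbv⟩ := exists_nbr (x := y) (y := x) hxy.symm
    (by rw [hpair]; exact hv) (by rw [hpair]; exact hu) hre.symm
    (by rw [hpair]; exact hnr') h2
  rw [hpair] at hrbv
  -- decompose the path
  cases p with
  | nil => simp at hlen; omega
  | @cons _ m _ hadj p' =>
    rw [Walk.cons_isPath_iff] at hp
    have hxp' : x ∉ p'.support := hp.2
    have hmx : m ≠ x := fun h => hxp' (h ▸ p'.start_mem_support)
    have hmy : m ≠ y := by
      rintro rfl
      rw [Walk.isPath_iff_eq_nil] at hp
      rw [hp.1] at hlen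
      simp at hlen
      omega
    have hm : m ∉ ({x, y} : Set V) := by simp [hmx, hmy]
    have hinternal : ∀ t ∈ (Walk.cons hadj p').support, t ≠ x → t ≠ y →
        ReachIn G ({x, y} : Set V)ᶜ m t := by
      intro t ht htx hty
      rw [Walk.support_cons, List.mem_cons] at ht
      rcases ht with rfl | ht
      · exact absurd rfl htx
      · exact reachIn_internal p' hp.1 hxp' hm t ht (by simp [htx, hty])
    have hcase : ¬ ReachIn G ({x, y} : Set V)ᶜ u m ∨ ¬ ReachIn G ({x, y} : Set V)ᶜ v m := by
      by_contra hcon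
      push_neg at hcon
      exact hnr (hcon.1.trans hcon.2.symm)
    have main : ∀ w : V, ¬ ReachIn G ({x, y} : Set V)ᶜ w m →
        ∀ aa bb : V, G.Adj x aa → G.Adj y bb → ReachIn G ({x, y} : Set V)ᶜ aa w →
        ReachIn G ({x, y} : Set V)ᶜ bb w →
        ∃ (vv : V) (c : G.Walk vv vv), c.IsCycle ∧ k + 1 ≤ c.length := by
      intro w hwm aa bb hxaa hybb hraa hrbb
      have hdisj : ∀ t ∈ (Walk.cons hadj p').support, t ≠ x → t ≠ y →
          ¬ ReachIn G ({x, y} : Set V)ᶜ aa t := by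
        intro t ht htx hty hcontra
        exact hwm ((hraa.symm.trans hcontra).trans
          (hinternal t ht htx hty).symm)
      obtain ⟨c, hc, hcl⟩ := build_cycle hxy hxaa hybb (hraa.trans hrbb.symm)
        (Walk.cons hadj p') ((Walk.cons_isPath_iff hadj p').mpr hp) hdisj
      exact ⟨x, c, hc, by omega⟩
    rcases hcase with hwm | hwm
    · exact main u hwm au bu hxau hybu hrau hrbu
    · exact main v hwm av bv hxav hybv hrav hrbv
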